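/- Under random cyclic sampling (each epoch {τ(k)}_{k=jM+1}^{(j+1)M} is a permutation of {1,…,M}), let {Λ_k} be reals with λ_k = Σ_{i=1}^{k} Λ_i > 0 for all k. For arbitrary x_0, the sampled Tikhonov iterates x_k = x_{k-1} − B_k(A_{τ(k)}ᵀ(A_{τ(k)} x_{k-1} − b_{τ(k)}) + Λ_k LᵀL x_{k-1}), with B_k = (λ_k LᵀL + Σ_{i=1}^{k} A_{τ(i)}ᵀA_{τ(i)})^{-1}, satisfy x_{jM} = (AᵀA + (λ_{jM}/j) LᵀL)^{-1} Aᵀ b after each epoch j, i.e. the epoch iterate is the Tikhonov solution with parameter λ_{jM}/j. -/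

import Mathlib

open Matrix Finset

private lemma sTik_sum_mulVec {n p : ℕ} {ι : Type*} (t : Finset ι)
    (f : ι → Matrix (Fin p) (Fin n) ℝ) (v : Fin n → ℝ) :
    (∑ i ∈ t, f i).mulVec v = ∑ i ∈ t, (f i).mulVec v := by
  ext j
  simp only [Matrix.mulVec, dotProduct, Matrix.sum_apply, Finset.sum_mul,
    Finset.sum_apply]
  rw [Finset.sum_comm]

private lemma sTik_posSemidef_sum {n : ℕ} {ι : Type*} (t : Finset ι)
    (f : ι → Matrix (Fin n) (Fin n) ℝ)
    (h : ∀ i ∈ t, (f i).PosSemidef) : (∑ i ∈ t, f i).PosSemidef := by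
  classical
  induction t using Finset.induction with
  | empty => exact ⟨by simp [Matrix.IsHermitian], fun x => by simp⟩
  | @insert a s ha ih =>
      rw [Finset.sum_insert ha]
      exact (h a (Finset.mem_insert_self a s)).add
        (ih fun i hi => h i (Finset.mem_insert_of_mem hi))

private lemma sTik_posDef_smul {n : ℕ} {D : Matrix (Fin n) (Fin n) ℝ} (hD : D.PosDef)
    {c : ℝ} (hc : 0 < c) : (c • D).PosDef := by
  refine PosDef.of_dotProduct_mulVec_pos ?_ fun x hx => ?_
  · show (c • D)ᴴ = c • D
    rw [conjTranspose_smul, star_trivial, hD.1]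
  · rw [smul_mulVec, dotProduct_smul, smul_eq_mul]
    exact mul_pos hc (hD.dotProduct_mulVec_pos hx)

private lemma sTik_posDef_LtL {s n : ℕ} (L : Matrix (Fin s) (Fin n) ℝ) (hL : L.rank = n) :
    (Lᵀ * L).PosDef := by
  have hker : LinearMap.ker L.mulVecLin = ⊥ := by
    have h1 := L.mulVecLin.finrank_range_add_finrank_ker
    rw [show Module.finrank ℝ (LinearMap.range L.mulVecLin) = L.rank from rfl, hL] at h1
    simp only [Module.finrank_pi, Fintype.card_fin] at h1
    have : Module.finrank ℝ (LinearMap.ker L.mulVecLin) = 0 := by omega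
    exact Submodule.finrank_eq_zero.mp this
  have hinj : Function.Injective L.mulVec := by
    have := LinearMap.ker_eq_bot.mp hker
    intro u v huv
    exact this (show L.mulVecLin u = L.mulVecLin v from huv)
  refine PosDef.of_dotProduct_mulVec_pos ?_ fun x hx => ?_
  · show (Lᵀ * L)ᴴ = Lᵀ * L
    rw [← conjTranspose_eq_transpose_of_trivial L]
    exact isHermitian_conjTranspose_mul_self L
  · have hLx : L.mulVec x ≠ 0 := fun h => hx (hinj (h.trans (L.mulVec_zero).symm))
    have heq : star x ⬝ᵥ (Lᵀ * L) *ᵥ x = (L *ᵥ x) ⬝ᵥ (L *ᵥ x) := by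
      rw [star_trivial, ← mulVec_mulVec, dotProduct_mulVec, vecMul_transpose]
    rw [heq]
    obtain ⟨i, hi⟩ := Function.ne_iff.mp hLx
    exact Finset.sum_pos' (fun j _ => mul_self_nonneg _)
      ⟨i, Finset.mem_univ i, mul_self_pos.mpr (by simpa using hi)⟩

private lemma sTik_epoch_sum {M : ℕ} {α : Type*} [AddCommMonoid α] (τ : ℕ → Fin M)
    (hτ : ∀ j : ℕ, Function.Bijective (fun t : Fin M => τ (j * M + (t : ℕ))))
    (f : Fin M → α) (j : ℕ) :
    ∑ i ∈ Finset.range (j * M), f (τ i) = j • ∑ i, f i := by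
  induction j with
  | zero => simp
  | succ j ih =>
      have hjM : (j + 1) * M = j * M + M := by ring
      rw [hjM, Finset.sum_range_add, ih]
      have h2 : ∑ i ∈ Finset.range M, f (τ (j * M + i)) = ∑ i, f i := by
        rw [Finset.sum_range fun i => f (τ (j * M + i))]
        exact Fintype.sum_bijective _ (hτ j) _ f (fun t => rfl)
      rw [h2, succ_nsmul]

/-- under random cyclic sampling, the sampled Tikhonov iterate after the
`j`-th epoch is the Tikhonov solution with regularization parameter `λ_{jM}/j`. -/
theorem sTik_epoch_iterate
    {m n s ℓ M : ℕ} (hM : 0 < M)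
    (A : Matrix (Fin m) (Fin n) ℝ) (b : Fin m → ℝ)
    (L : Matrix (Fin s) (Fin n) ℝ) (hL : L.rank = n)
    (W : Fin M → Matrix (Fin m) (Fin ℓ) ℝ)
    (hW : ∑ i, W i * (W i)ᵀ = (1 : Matrix (Fin m) (Fin m) ℝ))
    (τ : ℕ → Fin M)
    (hτ : ∀ j : ℕ, Function.Bijective (fun t : Fin M => τ (j * M + (t : ℕ))))
    (Ai : Fin M → Matrix (Fin ℓ) (Fin n) ℝ) (hAi : ∀ i, Ai i = (W i)ᵀ * A)
    (bi : Fin M → Fin ℓ → ℝ) (hbi : ∀ i, bi i = (W i)ᵀ.mulVec b)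
    (Lam : ℕ → ℝ) (lam : ℕ → ℝ)
    (hlamdef : ∀ j, lam j = ∑ i ∈ Finset.range j, Lam i)
    (hpos : ∀ j, 0 < j → 0 < lam j)
    (B : ℕ → Matrix (Fin n) (Fin n) ℝ)
    (hB : ∀ j, B j = (lam j • (Lᵀ * L) + ∑ i ∈ Finset.range j, (Ai (τ i))ᵀ * Ai (τ i))⁻¹)
    (x0 : Fin n → ℝ)
    (x : ℕ → Fin n → ℝ) (hx0 : x 0 = x0)
    (hx : ∀ k, x (k + 1) =
      x k - (B (k + 1)).mulVec ((Ai (τ k))ᵀ.mulVec ((Ai (τ k)).mulVec (x k) - bi (τ k))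
        + Lam k • (Lᵀ * L).mulVec (x k))) :
    ∀ j : ℕ, 0 < j →
      x (j * M) = (Aᵀ * A + (lam (j * M) / (j : ℝ)) • (Lᵀ * L))⁻¹.mulVec (Aᵀ.mulVec b) := by
  classical
  set D := Lᵀ * L with hD
  have hDpd : D.PosDef := sTik_posDef_LtL L hL
  set C : ℕ → Matrix (Fin n) (Fin n) ℝ :=
    fun k => lam k • D + ∑ i ∈ Finset.range k, (Ai (τ i))ᵀ * Ai (τ i) with hC
  have hPSD : ∀ i : Fin M, ((Ai i)ᵀ * Ai i).PosSemidef := fun i => by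
    rw [← conjTranspose_eq_transpose_of_trivial]
    exact posSemidef_conjTranspose_mul_self _
  have hCpd : ∀ k : ℕ, 0 < k → (C k).PosDef := fun k hk =>
    (sTik_posDef_smul hDpd (hpos k hk)).add_posSemidef
      (sTik_posSemidef_sum _ _ fun i _ => hPSD _)
  -- the key invariant
  have hinv : ∀ k : ℕ,
      (C k).mulVec (x k) = ∑ i ∈ Finset.range k, (Ai (τ i))ᵀ.mulVec (bi (τ i)) := by
    intro k
    induction k with
    | zero =>
        have : C 0 = 0 := by simp [hC, hlamdef 0]
        simp [this]
    | succ k ih =>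
        have hCinv : (C (k + 1)) * (C (k + 1))⁻¹ = 1 :=
          mul_nonsing_inv _ (isUnit_iff_ne_zero.mpr (hCpd (k + 1) k.succ_pos).det_pos.ne')
        have hBk : B (k + 1) = (C (k + 1))⁻¹ := by rw [hB (k + 1)]
        have hCsucc : C (k + 1) = C k + (Lam k • D + (Ai (τ k))ᵀ * Ai (τ k)) := by
          simp only [hC, hlamdef, Finset.sum_range_succ, add_smul]
          abel
        rw [hx k, hBk, mulVec_sub, mulVec_mulVec, hCinv, one_mulVec, hCsucc,
          Finset.sum_range_succ, ← ih]
        simp only [add_mulVec, mulVec_sub, mulVec_mulVec, smul_mulVec]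
        abel
  intro j hj
  have hjR : (0 : ℝ) < (j : ℝ) := by exact_mod_cast hj
  -- epoch sums
  have hsumA : ∑ i : Fin M, (Ai i)ᵀ * Ai i = Aᵀ * A := by
    have h1 : ∀ i : Fin M, (Ai i)ᵀ * Ai i = Aᵀ * (W i * (W i)ᵀ) * A := fun i => by
      rw [hAi, transpose_mul, transpose_transpose, Matrix.mul_assoc, Matrix.mul_assoc,
        Matrix.mul_assoc]
    simp_rw [h1]
    rw [← Matrix.sum_mul, ← Matrix.mul_sum, hW, Matrix.mul_one]
  have hsumb : ∑ i : Fin M, (Ai i)ᵀ.mulVec (bi i) = Aᵀ.mulVec b := by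
    have h1 : ∀ i : Fin M, (Ai i)ᵀ.mulVec (bi i) = (Aᵀ * (W i * (W i)ᵀ)).mulVec b := fun i => by
      rw [hAi, hbi, transpose_mul, transpose_transpose, mulVec_mulVec, Matrix.mul_assoc]
    simp_rw [h1]
    rw [← sTik_sum_mulVec, ← Matrix.mul_sum, hW, Matrix.mul_one]
  have hA2 : ∑ i ∈ Finset.range (j * M), (Ai (τ i))ᵀ * Ai (τ i) = (j : ℝ) • (Aᵀ * A) := by
    rw [sTik_epoch_sum τ hτ (fun i => (Ai i)ᵀ * Ai i) j, hsumA, ← Nat.cast_smul_eq_nsmul ℝ]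
  have hb2 : ∑ i ∈ Finset.range (j * M), (Ai (τ i))ᵀ.mulVec (bi (τ i))
      = (j : ℝ) • Aᵀ.mulVec b := by
    rw [sTik_epoch_sum τ hτ (fun i => (Ai i)ᵀ.mulVec (bi i)) j, hsumb, ← Nat.cast_smul_eq_nsmul ℝ]
  set E := Aᵀ * A + (lam (j * M) / (j : ℝ)) • D with hE
  have hCE : C (j * M) = (j : ℝ) • E := by
    rw [hC, hE]
    simp only [smul_add, smul_smul, hA2]
    rw [mul_div_cancel₀ _ hjR.ne', add_comm]
  have hEpd : E.PosDef := by
    have hAs : (Aᵀ * A).PosSemidef := by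
      rw [← conjTranspose_eq_transpose_of_trivial]
      exact posSemidef_conjTranspose_mul_self A
    exact Matrix.PosDef.posSemidef_add hAs
      (sTik_posDef_smul hDpd (div_pos (hpos _ (Nat.mul_pos hj hM)) hjR))
  have hEinv : E⁻¹ * E = 1 :=
    nonsing_inv_mul _ (isUnit_iff_ne_zero.mpr hEpd.det_pos.ne')
  have hkey : E.mulVec (x (j * M)) = Aᵀ.mulVec b := by
    have h := hinv (j * M)
    rw [hCE, hb2, smul_mulVec] at h
    exact smul_right_injective _ hjR.ne' h
  calc x (j * M) = (E⁻¹ * E).mulVec (x (j * M)) := by rw [hEinv, one_mulVec]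
    _ = E⁻¹.mulVec (Aᵀ.mulVec b) := by rw [← mulVec_mulVec, hkey]
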